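/- Let G be an abelian group with torsion subgroup H = {x ∈ G : nx = 0 for some integer n ≥ 1}, and let R = ⊕_{n∈G} R_n be a G-graded commutative ring. Then every idempotent element of R is contained in the subring ⊕_{h∈H} R_h. -/

import Mathlib

open DirectSum

section Pieces

variable {G : Type*} [AddCommGroup G] [DecidableEq G]
  {R : Type*} [CommRing R] (𝒜 : G → AddSubgroup R) [GradedRing 𝒜] (φ : G →+ ℚ)

/-- Sum of the homogeneous components of `x` of degrees `n` with `φ n = q`. -/
noncomputable def piece (q : ℚ) (x : R) : R :=
  DFinsupp.sumAddHom (fun n => if φ n = q then (𝒜 n).subtype else 0)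
    (DirectSum.decompose 𝒜 x)

lemma piece_add (q : ℚ) (x y : R) :
    piece 𝒜 φ q (x + y) = piece 𝒜 φ q x + piece 𝒜 φ q y := by
  unfold piece
  rw [DirectSum.decompose_add, map_add]

lemma piece_zero (q : ℚ) : piece 𝒜 φ q 0 = 0 := by
  unfold piece
  rw [DirectSum.decompose_zero, map_zero]

lemma piece_sub (q : ℚ) (x y : R) :
    piece 𝒜 φ q (x - y) = piece 𝒜 φ q x - piece 𝒜 φ q y := by
  unfold piece
  rw [show DirectSum.decompose 𝒜 (x - y)
      = DirectSum.decompose 𝒜 x - DirectSum.decompose 𝒜 y from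
    map_sub (DirectSum.decomposeAddEquiv 𝒜) x y, map_sub]

lemma piece_sum {ι : Type*} (q : ℚ) (s : Finset ι) (f : ι → R) :
    piece 𝒜 φ q (∑ i ∈ s, f i) = ∑ i ∈ s, piece 𝒜 φ q (f i) := by
  unfold piece
  rw [DirectSum.decompose_sum, map_sum]

lemma piece_of_mem {z : R} {k : G} (hz : z ∈ 𝒜 k) (q : ℚ) :
    piece 𝒜 φ q z = if φ k = q then z else 0 := by
  unfold piece
  rw [DirectSum.decompose_of_mem 𝒜 hz]
  erw [DFinsupp.sumAddHom_single]
  split_ifs <;> rfl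

lemma piece_eq_sum_support [∀ (i : G) (x : 𝒜 i), Decidable (x ≠ 0)] (q : ℚ) (x : R) :
    piece 𝒜 φ q x = ∑ n ∈ (DirectSum.decompose 𝒜 x).support,
      if φ n = q then (DirectSum.decompose 𝒜 x n : R) else 0 := by
  unfold piece
  rw [DFinsupp.sumAddHom_apply, DFinsupp.sum]
  refine Finset.sum_congr rfl fun n _ => ?_
  split_ifs <;> rfl

lemma piece_eq_zero {q : ℚ} {x : R}
    (h : ∀ n, (DirectSum.decompose 𝒜 x n : R) ≠ 0 → φ n ≠ q) :
    piece 𝒜 φ q x = 0 := by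
  classical
  rw [piece_eq_sum_support]
  refine Finset.sum_eq_zero fun n hn => ?_
  rw [DFinsupp.mem_support_iff] at hn
  rw [if_neg (h n (by simpa using hn))]

lemma sum_piece (s : Finset ℚ) (x : R)
    (hs : ∀ n, (DirectSum.decompose 𝒜 x n : R) ≠ 0 → φ n ∈ s) :
    ∑ q ∈ s, piece 𝒜 φ q x = x := by
  classical
  simp_rw [piece_eq_sum_support]
  rw [Finset.sum_comm]
  have key : ∀ n ∈ (DirectSum.decompose 𝒜 x).support,
      (∑ q ∈ s, if φ n = q then (DirectSum.decompose 𝒜 x n : R) else 0)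
        = (DirectSum.decompose 𝒜 x n : R) := by
    intro n hn
    rw [DFinsupp.mem_support_iff] at hn
    rw [Finset.sum_ite_eq s (φ n) (fun _ => (DirectSum.decompose 𝒜 x n : R)),
      if_pos (hs n (by simpa using hn))]
  rw [Finset.sum_congr rfl key, DirectSum.sum_support_decompose]

lemma decompose_piece (q : ℚ) (x : R) (n : G) :
    (DirectSum.decompose 𝒜 (piece 𝒜 φ q x) n : R)
      = if φ n = q then (DirectSum.decompose 𝒜 x n : R) else 0 := by
  classical
  rw [piece_eq_sum_support, DirectSum.decompose_sum, DFinsupp.finset_sum_apply,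
    AddSubmonoidClass.coe_finset_sum]
  have hterm : ∀ m ∈ (DirectSum.decompose 𝒜 x).support, m ≠ n →
      (DirectSum.decompose 𝒜
        (if φ m = q then (DirectSum.decompose 𝒜 x m : R) else 0) n : R) = 0 := by
    intro m _ hmn
    split_ifs with h
    · rw [DirectSum.decompose_of_mem_ne 𝒜 (SetLike.coe_mem _) hmn]
    · simp
  by_cases hn : n ∈ (DirectSum.decompose 𝒜 x).support
  · rw [Finset.sum_eq_single_of_mem n hn hterm]
    split_ifs with h
    · rw [DirectSum.decompose_of_mem_same 𝒜 (SetLike.coe_mem _)]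
    · simp
  · rw [Finset.sum_eq_zero fun m hm => ?_]
    · rw [DFinsupp.notMem_support_iff] at hn
      simp [hn]
    · rcases eq_or_ne m n with rfl | hmn
      · exact absurd hm hn
      · exact hterm m hm hmn

lemma piece_mul {a b : ℚ} {x y : R}
    (hx : ∀ n, (DirectSum.decompose 𝒜 x n : R) ≠ 0 → φ n ≤ a)
    (hy : ∀ n, (DirectSum.decompose 𝒜 y n : R) ≠ 0 → φ n ≤ b) :
    piece 𝒜 φ (a + b) (x * y) = piece 𝒜 φ a x * piece 𝒜 φ b y := by
  classical
  conv_lhs => rw [← DirectSum.sum_support_decompose 𝒜 x,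
    ← DirectSum.sum_support_decompose 𝒜 y]
  rw [Finset.sum_mul_sum, piece_sum]
  rw [piece_eq_sum_support 𝒜 φ a x, piece_eq_sum_support 𝒜 φ b y, Finset.sum_mul_sum]
  refine Finset.sum_congr rfl fun i hi => ?_
  rw [piece_sum]
  refine Finset.sum_congr rfl fun j hj => ?_
  rw [DFinsupp.mem_support_iff] at hi hj
  have hia : φ i ≤ a := hx i (by simpa using hi)
  have hjb : φ j ≤ b := hy j (by simpa using hj)
  rw [piece_of_mem 𝒜 φ (SetLike.mul_mem_graded (SetLike.coe_mem _) (SetLike.coe_mem _)),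
    map_add]
  by_cases h1 : φ i = a
  · by_cases h2 : φ j = b
    · rw [if_pos (by rw [h1, h2]), if_pos h1, if_pos h2]
    · rw [if_neg (by intro h; exact h2 (by linarith)), if_pos h1, if_neg h2, mul_zero]
  · rw [if_neg (by intro h; exact h1 (by linarith)), if_neg h1, zero_mul]

lemma decompose_mul_bound {a b : ℚ} {x y : R}
    (hx : ∀ n, (DirectSum.decompose 𝒜 x n : R) ≠ 0 → φ n ≤ a)
    (hy : ∀ n, (DirectSum.decompose 𝒜 y n : R) ≠ 0 → φ n ≤ b) :
    ∀ n, (DirectSum.decompose 𝒜 (x * y) n : R) ≠ 0 → φ n ≤ a + b := by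
  classical
  intro n hn
  by_contra hgt
  push_neg at hgt
  apply hn
  have hxy : x * y = ∑ i ∈ (DirectSum.decompose 𝒜 x).support,
      ∑ j ∈ (DirectSum.decompose 𝒜 y).support,
      (DirectSum.decompose 𝒜 x i : R) * (DirectSum.decompose 𝒜 y j : R) := by
    conv_lhs => rw [← DirectSum.sum_support_decompose 𝒜 x,
      ← DirectSum.sum_support_decompose 𝒜 y]
    rw [Finset.sum_mul_sum]
  rw [hxy, ← Finset.sum_product']
  rw [DirectSum.decompose_sum, DFinsupp.finset_sum_apply,
    AddSubmonoidClass.coe_finset_sum]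
  refine Finset.sum_eq_zero fun p hp => ?_
  rw [Finset.mem_product] at hp
  obtain ⟨hi, hj⟩ := hp
  rw [DFinsupp.mem_support_iff] at hi hj
  rcases eq_or_ne (p.1 + p.2) n with hij | hij
  · exfalso
    have hia : φ p.1 ≤ a := hx p.1 (by simpa using hi)
    have hjb : φ p.2 ≤ b := hy p.2 (by simpa using hj)
    have : φ n = φ p.1 + φ p.2 := by rw [← hij, map_add]
    linarith
  · rw [DirectSum.decompose_of_mem_ne 𝒜
      (SetLike.mul_mem_graded (SetLike.coe_mem _) (SetLike.coe_mem _)) hij]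

lemma piece_pow {a : ℚ} {x : R}
    (hx : ∀ n, (DirectSum.decompose 𝒜 x n : R) ≠ 0 → φ n ≤ a) (k : ℕ) :
    (∀ n, (DirectSum.decompose 𝒜 (x ^ k) n : R) ≠ 0 → φ n ≤ (k : ℚ) * a) ∧
      piece 𝒜 φ ((k : ℚ) * a) (x ^ k) = (piece 𝒜 φ a x) ^ k := by
  induction k with
  | zero =>
    constructor
    · intro n hn
      rcases eq_or_ne (0 : G) n with h | h
      · simp [← h]
      · exfalso
        apply hn
        rw [pow_zero, DirectSum.decompose_of_mem_ne 𝒜 (SetLike.one_mem_graded 𝒜) h]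
    · rw [pow_zero, pow_zero]
      rw [show ((0 : ℕ) : ℚ) * a = 0 by ring,
        piece_of_mem 𝒜 φ (SetLike.one_mem_graded 𝒜), if_pos (map_zero φ)]
  | succ k ih =>
    have hcast : ((k + 1 : ℕ) : ℚ) * a = (k : ℚ) * a + a := by push_cast; ring
    constructor
    · intro n hn
      rw [pow_succ] at hn
      rw [hcast]
      exact decompose_mul_bound 𝒜 φ ih.1 hx n hn
    · rw [pow_succ, pow_succ, hcast, piece_mul 𝒜 φ ih.1 hx, ih.2]

lemma piece_isNilpotent_aux :
    ∀ (k : ℕ) (s : Finset ℚ) (z : R), s.card ≤ k →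
      (∀ n, (DirectSum.decompose 𝒜 z n : R) ≠ 0 → φ n ∈ s) →
      IsNilpotent z → ∀ q, IsNilpotent (piece 𝒜 φ q z) := by
  intro k
  induction k with
  | zero =>
    intro s z hcard hs _ q
    have h0 : ∀ n, (DirectSum.decompose 𝒜 z n : R) ≠ 0 → φ n ≠ q := by
      intro n hn _
      have hmem := hs n hn
      rw [Finset.card_eq_zero.mp (Nat.le_zero.mp hcard)] at hmem
      exact absurd hmem (Finset.notMem_empty _)
    exact ⟨1, by rw [pow_one, piece_eq_zero 𝒜 φ h0]⟩
  | succ k ih =>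
    intro s z hcard hs hz q
    by_cases hq : ∀ n, (DirectSum.decompose 𝒜 z n : R) ≠ 0 → φ n ≠ q
    · exact ⟨1, by rw [pow_one, piece_eq_zero 𝒜 φ hq]⟩
    push_neg at hq
    obtain ⟨n₁, hn₁, hn₁q⟩ := hq
    have hne : s.Nonempty := ⟨q, hn₁q ▸ hs n₁ hn₁⟩
    set M := s.max' hne with hM
    have hb : ∀ n, (DirectSum.decompose 𝒜 z n : R) ≠ 0 → φ n ≤ M :=
      fun n h => Finset.le_max' s _ (hs n h)
    obtain ⟨N, hN⟩ := hz
    have hMnil : IsNilpotent (piece 𝒜 φ M z) := by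
      refine ⟨N, ?_⟩
      rw [← (piece_pow 𝒜 φ hb N).2, hN, piece_zero]
    rcases eq_or_ne q M with rfl | hqM
    · exact hMnil
    have hz' : IsNilpotent (z - piece 𝒜 φ M z) :=
      (Commute.all _ _).isNilpotent_sub ⟨N, hN⟩ hMnil
    have hs' : ∀ n, (DirectSum.decompose 𝒜 (z - piece 𝒜 φ M z) n : R) ≠ 0 →
        φ n ∈ s.erase M := by
      intro n hn
      have hdec : (DirectSum.decompose 𝒜 (z - piece 𝒜 φ M z) n : R)
          = (DirectSum.decompose 𝒜 z n : R)
            - (DirectSum.decompose 𝒜 (piece 𝒜 φ M z) n : R) := by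
        rw [show DirectSum.decompose 𝒜 (z - piece 𝒜 φ M z)
            = DirectSum.decompose 𝒜 z - DirectSum.decompose 𝒜 (piece 𝒜 φ M z) from
          map_sub (DirectSum.decomposeAddEquiv 𝒜) _ _]
        rfl
      rw [hdec, decompose_piece] at hn
      by_cases hnM : φ n = M
      · rw [if_pos hnM, sub_self] at hn
        exact absurd rfl hn
      · rw [if_neg hnM, sub_zero] at hn
        exact Finset.mem_erase.mpr ⟨hnM, hs n hn⟩
    have hcard' : (s.erase M).card ≤ k := by
      have hMs : M ∈ s := by rw [hM]; exact s.max'_mem hne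
      have := Finset.card_erase_of_mem hMs
      omega
    have := ih (s.erase M) (z - piece 𝒜 φ M z) hcard' hs' hz' q
    have heq : piece 𝒜 φ q (z - piece 𝒜 φ M z) = piece 𝒜 φ q z := by
      rw [piece_sub, piece_eq_zero 𝒜 φ (x := piece 𝒜 φ M z), sub_zero]
      intro n hn
      rw [decompose_piece] at hn
      by_cases hnM : φ n = M
      · rw [hnM]; exact Ne.symm hqM
      · rw [if_neg hnM] at hn; exact absurd rfl hn
    rwa [heq] at this

lemma piece_isNilpotent {z : R} (hz : IsNilpotent z) (q : ℚ) :
    IsNilpotent (piece 𝒜 φ q z) := by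
  classical
  refine piece_isNilpotent_aux 𝒜 φ ((DirectSum.decompose 𝒜 z).support.image φ).card
    ((DirectSum.decompose 𝒜 z).support.image φ) z le_rfl (fun n hn => ?_) hz q
  exact Finset.mem_image_of_mem φ (DFinsupp.mem_support_iff.mpr (by simpa using hn))

lemma piece_pos_isNilpotent_aux :
    ∀ (k : ℕ) (s : Finset ℚ) (x : R), (s.filter (fun q => 0 < q)).card ≤ k →
      (∀ n, (DirectSum.decompose 𝒜 x n : R) ≠ 0 → φ n ∈ s) →
      IsNilpotent (x * x - x) → ∀ q, 0 < q → IsNilpotent (piece 𝒜 φ q x) := by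
  intro k
  induction k with
  | zero =>
    intro s x hcard hs _ q hqpos
    have h0 : ∀ n, (DirectSum.decompose 𝒜 x n : R) ≠ 0 → φ n ≠ q := by
      intro n hn hnq
      have hmem : q ∈ s.filter (fun q => 0 < q) :=
        Finset.mem_filter.mpr ⟨hnq ▸ hs n hn, hqpos⟩
      rw [Finset.card_eq_zero.mp (Nat.le_zero.mp hcard)] at hmem
      exact absurd hmem (Finset.notMem_empty _)
    exact ⟨1, by rw [pow_one, piece_eq_zero 𝒜 φ h0]⟩
  | succ k ih =>
    intro s x hcard hs hnil q hqpos
    by_cases hq : ∀ n, (DirectSum.decompose 𝒜 x n : R) ≠ 0 → φ n ≠ q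
    · exact ⟨1, by rw [pow_one, piece_eq_zero 𝒜 φ hq]⟩
    push_neg at hq
    obtain ⟨n₁, hn₁, hn₁q⟩ := hq
    have hne : s.Nonempty := ⟨q, hn₁q ▸ hs n₁ hn₁⟩
    set M := s.max' hne with hM
    have hMpos : 0 < M := lt_of_lt_of_le hqpos (Finset.le_max' s q (hn₁q ▸ hs n₁ hn₁))
    have hb : ∀ n, (DirectSum.decompose 𝒜 x n : R) ≠ 0 → φ n ≤ M :=
      fun n h => Finset.le_max' s _ (hs n h)
    set p := piece 𝒜 φ M x with hp
    have hsq : p * p = piece 𝒜 φ (M + M) (x * x - x) := by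
      have h1 : piece 𝒜 φ (M + M) (x * x) = p * p := piece_mul 𝒜 φ hb hb
      have h2 : piece 𝒜 φ (M + M) (x * x)
          = piece 𝒜 φ (M + M) (x * x - x) + piece 𝒜 φ (M + M) x := by
        rw [← piece_add, sub_add_cancel]
      have h3 : piece 𝒜 φ (M + M) x = 0 := by
        refine piece_eq_zero 𝒜 φ fun n hn => ?_
        have := hb n hn
        intro h; rw [h] at this; linarith
      rw [← h1, h2, h3, add_zero]
    have hpnil : IsNilpotent p := by
      have : IsNilpotent (p * p) := hsq ▸ piece_isNilpotent 𝒜 φ hnil (M + M)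
      obtain ⟨N, hN⟩ := this
      exact ⟨2 * N, by rw [pow_mul, sq, hN]⟩
    rcases eq_or_ne q M with rfl | hqM
    · exact hpnil
    set x' := x - p with hx'
    have hnil' : IsNilpotent (x' * x' - x') := by
      have hrw : x' * x' - x' = (x * x - x) + p * (p - 2 * x + 1) := by
        rw [hx']; ring
      rw [hrw]
      exact (Commute.all _ _).isNilpotent_add hnil
        ((Commute.all _ _).isNilpotent_mul_right hpnil)
    have hs' : ∀ n, (DirectSum.decompose 𝒜 x' n : R) ≠ 0 → φ n ∈ s.erase M := by
      intro n hn
      have hdec : (DirectSum.decompose 𝒜 x' n : R)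
          = (DirectSum.decompose 𝒜 x n : R)
            - (DirectSum.decompose 𝒜 (piece 𝒜 φ M x) n : R) := by
        rw [show DirectSum.decompose 𝒜 x'
            = DirectSum.decompose 𝒜 x - DirectSum.decompose 𝒜 (piece 𝒜 φ M x) from
          map_sub (DirectSum.decomposeAddEquiv 𝒜) _ _]
        rfl
      rw [hdec, decompose_piece] at hn
      by_cases hnM : φ n = M
      · rw [if_pos hnM, sub_self] at hn
        exact absurd rfl hn
      · rw [if_neg hnM, sub_zero] at hn
        exact Finset.mem_erase.mpr ⟨hnM, hs n hn⟩
    have hcard' : ((s.erase M).filter (fun q => 0 < q)).card ≤ k := by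
      rw [Finset.filter_erase]
      have hMs : M ∈ s := by rw [hM]; exact s.max'_mem hne
      have hMmem : M ∈ s.filter (fun q => 0 < q) :=
        Finset.mem_filter.mpr ⟨hMs, hMpos⟩
      have := Finset.card_erase_of_mem hMmem
      omega
    have := ih (s.erase M) x' hcard' hs' hnil' q hqpos
    have heq : piece 𝒜 φ q x' = piece 𝒜 φ q x := by
      rw [hx', piece_sub, piece_eq_zero 𝒜 φ (x := p), sub_zero]
      intro n hn
      rw [hp, decompose_piece] at hn
      by_cases hnM : φ n = M
      · rw [hnM]; exact Ne.symm hqM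
      · rw [if_neg hnM] at hn; exact absurd rfl hn
    rwa [heq] at this

lemma piece_pos_isNilpotent {x : R} (hx : IsNilpotent (x * x - x)) {q : ℚ} (hq : 0 < q) :
    IsNilpotent (piece 𝒜 φ q x) := by
  classical
  refine piece_pos_isNilpotent_aux 𝒜 φ
    ((((DirectSum.decompose 𝒜 x).support.image φ)).filter (fun q => 0 < q)).card
    ((DirectSum.decompose 𝒜 x).support.image φ) x le_rfl (fun n hn => ?_) hx q hq
  exact Finset.mem_image_of_mem φ (DFinsupp.mem_support_iff.mpr (by simpa using hn))

lemma piece_neg_hom (q : ℚ) (x : R) : piece 𝒜 (-φ) (-q) x = piece 𝒜 φ q x := by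
  have h : (fun n => if (-φ) n = -q then (𝒜 n).subtype else 0)
      = (fun n => if φ n = q then (𝒜 n).subtype else 0) := by
    funext n
    by_cases hc : φ n = q
    · rw [if_pos hc, if_pos (show (-φ) n = -q by simpa using hc)]
    · rw [if_neg hc, if_neg (show ¬(-φ) n = -q by simpa using hc)]
  unfold piece
  rw [h]

/-- The subring of elements all of whose homogeneous components have degrees in `ker φ`. -/
def levelZeroSubring : Subring R where
  carrier := {x : R | ∀ n, φ n ≠ 0 → (DirectSum.decompose 𝒜 x n : R) = 0}
  zero_mem' := by
    intro n _
    rw [DirectSum.decompose_zero]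
    rfl
  one_mem' := by
    intro n hn
    have hn0 : (0 : G) ≠ n := fun h => hn (h ▸ map_zero φ)
    rw [DirectSum.decompose_of_mem_ne 𝒜 (SetLike.one_mem_graded 𝒜) hn0]
  add_mem' := by
    intro x y hx hy n hn
    rw [DirectSum.decompose_add]
    have : (((DirectSum.decompose 𝒜 x + DirectSum.decompose 𝒜 y) n) : R)
        = (DirectSum.decompose 𝒜 x n : R) + (DirectSum.decompose 𝒜 y n : R) := rfl
    rw [this, hx n hn, hy n hn, add_zero]
  neg_mem' := by
    intro x hx n hn
    rw [show DirectSum.decompose 𝒜 (-x) = -(DirectSum.decompose 𝒜 x) from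
      map_neg (DirectSum.decomposeAddEquiv 𝒜) x]
    have : ((((-(DirectSum.decompose 𝒜 x)) n) : 𝒜 n) : R)
        = -(DirectSum.decompose 𝒜 x n : R) := rfl
    rw [this, hx n hn, neg_zero]
  mul_mem' := by
    intro x y hx hy n hn
    classical
    have hxy : x * y = ∑ i ∈ (DirectSum.decompose 𝒜 x).support,
        ∑ j ∈ (DirectSum.decompose 𝒜 y).support,
        (DirectSum.decompose 𝒜 x i : R) * (DirectSum.decompose 𝒜 y j : R) := by
      conv_lhs => rw [← DirectSum.sum_support_decompose 𝒜 x,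
        ← DirectSum.sum_support_decompose 𝒜 y]
      rw [Finset.sum_mul_sum]
    show (DirectSum.decompose 𝒜 (x * y) n : R) = 0
    rw [hxy, ← Finset.sum_product', DirectSum.decompose_sum, DFinsupp.finset_sum_apply,
      AddSubmonoidClass.coe_finset_sum]
    refine Finset.sum_eq_zero fun p hp => ?_
    rw [Finset.mem_product] at hp
    obtain ⟨hi, hj⟩ := hp
    rw [DFinsupp.mem_support_iff] at hi hj
    have hφ1 : φ p.1 = 0 := by
      by_contra h
      exact hi (by simpa using hx p.1 h)
    have hφ2 : φ p.2 = 0 := by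
      by_contra h
      exact hj (by simpa using hy p.2 h)
    have hij : p.1 + p.2 ≠ n := by
      intro h
      apply hn
      rw [← h, map_add, hφ1, hφ2, add_zero]
    rw [DirectSum.decompose_of_mem_ne 𝒜
      (SetLike.mul_mem_graded (SetLike.coe_mem _) (SetLike.coe_mem _)) hij]

/-- Key lemma: if `φ n ≠ 0` then the `n`-th component of an idempotent vanishes. -/
lemma idempotent_component_eq_zero {e : R} (he : IsIdempotentElem e)
    {n₀ : G} (hφ : φ n₀ ≠ 0) : (DirectSum.decompose 𝒜 e n₀ : R) = 0 := by
  classical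
  have hnil0 : IsNilpotent (e * e - e) := ⟨1, by rw [pow_one, he.eq, sub_self]⟩
  -- all pieces at nonzero levels are nilpotent
  have hpieces : ∀ q : ℚ, q ≠ 0 → IsNilpotent (piece 𝒜 φ q e) := by
    intro q hq
    rcases lt_or_gt_of_ne hq with hlt | hgt
    · rw [← piece_neg_hom]
      have hnil0' : IsNilpotent (e * e - e) := hnil0
      exact piece_pos_isNilpotent 𝒜 (-φ) hnil0' (by linarith : (0:ℚ) < -q)
    · exact piece_pos_isNilpotent 𝒜 φ hnil0 hgt
  set s : Finset ℚ := insert 0 ((DirectSum.decompose 𝒜 e).support.image φ) with hs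
  have hsupp : ∀ n, (DirectSum.decompose 𝒜 e n : R) ≠ 0 → φ n ∈ s := by
    intro n hn
    exact Finset.mem_insert_of_mem
      (Finset.mem_image_of_mem φ (DFinsupp.mem_support_iff.mpr (by simpa using hn)))
  have hsum : ∑ q ∈ s, piece 𝒜 φ q e = e := sum_piece 𝒜 φ s e hsupp
  have h0s : (0 : ℚ) ∈ s := Finset.mem_insert_self 0 _
  set c : R := piece 𝒜 φ 0 e with hc
  set u : R := ∑ q ∈ s.erase 0, piece 𝒜 φ q e with hu
  have hecu : e = c + u := by
    rw [hc, hu, Finset.add_sum_erase s (fun q => piece 𝒜 φ q e) h0s]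
    exact hsum.symm
  have hunil : IsNilpotent u := by
    rw [hu]
    exact isNilpotent_sum fun q hq => hpieces q (Finset.ne_of_mem_erase hq)
  have hcnil : IsNilpotent (c * c - c) := by
    have hrw : c * c - c = (e * e - e) + u * (u + 1 - 2 * e) := by
      have : c = e - u := by rw [hecu]; ring
      rw [this]; ring
    rw [hrw, he.eq, sub_self, zero_add]
    exact (Commute.all _ _).isNilpotent_mul_right hunil
  have hcA : c ∈ levelZeroSubring 𝒜 φ := by
    intro n hn
    show (DirectSum.decompose 𝒜 c n : R) = 0
    rw [hc, decompose_piece, if_neg hn]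
  -- lift to an idempotent inside the level-zero subring
  set A : Subring R := levelZeroSubring 𝒜 φ with hA
  set c' : A := ⟨c, hcA⟩ with hc'
  set d : A := c' * c' - c' with hd
  have hdnil : IsNilpotent d := by
    obtain ⟨N, hN⟩ := hcnil
    refine ⟨N, ?_⟩
    apply Subtype.ext
    have : ((d ^ N : A) : R) = (c * c - c) ^ N := by
      push_cast [hd, hc']
      ring
    rw [this, hN]
    rfl
  set I : Ideal A := Ideal.span {d} with hI
  have hker : ∀ a ∈ RingHom.ker (Ideal.Quotient.mk I), IsNilpotent a := by
    intro a ha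
    rw [Ideal.mk_ker, hI, Ideal.mem_span_singleton] at ha
    obtain ⟨r, hr⟩ := ha
    rw [hr]
    exact (Commute.all _ _).isNilpotent_mul_right hdnil
  have hidem : IsIdempotentElem (Ideal.Quotient.mk I c') := by
    show Ideal.Quotient.mk I c' * Ideal.Quotient.mk I c' = Ideal.Quotient.mk I c'
    rw [← map_mul, Ideal.Quotient.eq]
    exact hI ▸ Ideal.mem_span_singleton_self d
  obtain ⟨f', hf'idem, hf'eq⟩ := exists_isIdempotentElem_eq_of_ker_isNilpotent
    (Ideal.Quotient.mk I) hker (Ideal.Quotient.mk I c')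
    ⟨c', rfl⟩ hidem
  have hfcnil : IsNilpotent (f' - c') := by
    have hmem : f' - c' ∈ I := Ideal.Quotient.eq.mp hf'eq
    rw [hI, Ideal.mem_span_singleton] at hmem
    obtain ⟨r, hr⟩ := hmem
    rw [hr]
    exact (Commute.all _ _).isNilpotent_mul_right hdnil
  -- back to R
  set f : R := (f' : R) with hf
  have hfidem : IsIdempotentElem f := by
    show f * f = f
    rw [hf, ← Subring.coe_mul, hf'idem.eq]
  have hfcRnil : IsNilpotent (f - c) := by
    have := IsNilpotent.map hfcnil A.subtype
    simpa using this
  have hefnil : IsNilpotent (e - f) := by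
    have hrw : e - f = u - (f - c) := by rw [hecu]; ring
    rw [hrw]
    exact (Commute.all _ _).isNilpotent_sub hunil hfcRnil
  have hef : e = f := eq_of_isNilpotent_sub_of_isIdempotentElem he hfidem hefnil
  rw [hef]
  exact f'.2 n₀ hφ

end Pieces

/-- Every idempotent of a `G`-graded commutative ring, with `G` an abelian group, is
contained in the subring `⊕_{h ∈ H} R_h`, where `H` is the torsion subgroup of `G`: all
homogeneous components of the idempotent of degree outside `H` vanish. -/
theorem idempotent_supported_on_torsion_subgroup
    {G : Type*} [AddCommGroup G] [DecidableEq G]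
    {R : Type*} [CommRing R] (𝒜 : G → AddSubgroup R) [GradedRing 𝒜]
    (e : R) (he : IsIdempotentElem e) :
    ∀ n : G, (¬ ∃ k : ℕ, 1 ≤ k ∧ k • n = 0) → (DirectSum.decompose 𝒜 e n : R) = 0 := by
  intro n hn
  push_neg at hn
  -- `n` has infinite order; build `φ : G →+ ℚ` with `φ n = 1`
  set ψ : ℤ →+ G := (zmultiplesHom G) n with hψ
  have hinj : Function.Injective ψ := by
    rw [injective_iff_map_eq_zero]
    intro a ha
    by_contra ha0
    have hpos : 1 ≤ a.natAbs := Int.natAbs_pos.mpr ha0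
    have hψa : a • n = 0 := by rwa [hψ, zmultiplesHom_apply] at ha
    have key : (a.natAbs : ℤ) • n = 0 := by
      rcases Int.natAbs_eq a with h | h
      · rw [← h]; exact hψa
      · have h2 := hψa
        rw [h, neg_zsmul] at h2
        exact neg_eq_zero.mp h2
    exact hn a.natAbs hpos (by rw [← natCast_zsmul]; exact key)
  have baer : Module.Baer ℤ ℚ := Module.Baer.of_divisible ℚ
  obtain ⟨φ, hφ⟩ := baer.extension_property_addMonoidHom ψ hinj (Int.castAddHom ℚ)
  have hφn : φ n = 1 := by
    have h1 : ψ 1 = n := one_zsmul n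
    have := DFunLike.congr_fun hφ 1
    simp only [AddMonoidHom.comp_apply, h1] at this
    rw [this]
    simp
  exact idempotent_component_eq_zero 𝒜 φ he (by rw [hφn]; exact one_ne_zero)
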